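/- Let S be a finite set of K states, M ≥ 1, q = (q₁,…,q_M) nonnegative weights, W_{x,y} : {1,…,M}² → ℝ bounded, Φ_{x,y} : ℝ → ℝ Lipschitz continuous, bounded, and nonnegative for each pair of distinct states (x,y), and ψ : S×S → S given. Then for every initial condition (P^1(0),…,P^M(0)) with each P^j(0) in the probability simplex Δ = {P ∈ ℝ^S : P_x ≥ 0, Σ_x P_x = 1}, the macroscale generalized Kolmogorov equations d/dt P_x^j = Σ_{y≠x} Φ_{y,x}((1/M) Σ_{k=1}^M q_k W_{y,x}(j,k) P_{ψ(y,x)}^k) P_y^j − Σ_{y≠x} Φ_{x,y}((1/M) Σ_{k=1}^M q_k W_{x,y}(j,k) P_{ψ(x,y)}^k) P_x^j, for j = 1,…,M and x ∈ S, have a unique solution defined for all t ≥ 0, and each P^j(t) remains in Δ for all t ≥ 0. -/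

import Mathlib

open Set

/-! ### Auxiliary machinery -/

section Aux

/-- `g` is Lipschitz and bounded (with unspecified constants). -/
def LipBnd {E : Type*} [PseudoMetricSpace E] (g : E → ℝ) : Prop :=
  ∃ K C : ℝ, (∀ p p', |g p - g p'| ≤ K * dist p p') ∧ ∀ p, |g p| ≤ C

namespace LipBnd

variable {E : Type*} [PseudoMetricSpace E] {g h : E → ℝ}

lemma const (c : ℝ) : LipBnd (fun _ : E => c) :=
  ⟨0, |c|, fun p p' => by simp, fun _ => le_refl _⟩

lemma mul (hg : LipBnd g) (hh : LipBnd h) : LipBnd (fun p => g p * h p) := by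
  obtain ⟨K1, C1, hl1, hb1⟩ := hg
  obtain ⟨K2, C2, hl2, hb2⟩ := hh
  refine ⟨C1 * K2 + K1 * C2, C1 * C2, fun p p' => ?_, fun p => ?_⟩
  · have h1 : |g p * h p - g p' * h p'| ≤ |g p| * |h p - h p'| + |g p - g p'| * |h p'| := by
      calc |g p * h p - g p' * h p'|
          = |g p * (h p - h p') + (g p - g p') * h p'| := by ring_nf
        _ ≤ |g p * (h p - h p')| + |(g p - g p') * h p'| := abs_add_le _ _
        _ = |g p| * |h p - h p'| + |g p - g p'| * |h p'| := by rw [abs_mul, abs_mul]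
    have h2 : |g p| * |h p - h p'| ≤ C1 * (K2 * dist p p') :=
      mul_le_mul (hb1 p) (hl2 p p') (abs_nonneg _) ((abs_nonneg _).trans (hb1 p))
    have h3 : |g p - g p'| * |h p'| ≤ (K1 * dist p p') * C2 :=
      mul_le_mul (hl1 p p') (hb2 p') (abs_nonneg _) ((abs_nonneg _).trans (hl1 p p'))
    nlinarith [h1, h2, h3]
  · calc |g p * h p| = |g p| * |h p| := abs_mul _ _
      _ ≤ C1 * C2 := mul_le_mul (hb1 p) (hb2 p) (abs_nonneg _) ((abs_nonneg _).trans (hb1 p))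

lemma sub (hg : LipBnd g) (hh : LipBnd h) : LipBnd (fun p => g p - h p) := by
  obtain ⟨K1, C1, hl1, hb1⟩ := hg
  obtain ⟨K2, C2, hl2, hb2⟩ := hh
  refine ⟨K1 + K2, C1 + C2, fun p p' => ?_, fun p => ?_⟩
  · calc |g p - h p - (g p' - h p')| = |(g p - g p') - (h p - h p')| := by ring_nf
      _ ≤ |g p - g p'| + |h p - h p'| := abs_sub _ _
      _ ≤ K1 * dist p p' + K2 * dist p p' := add_le_add (hl1 p p') (hl2 p p')
      _ = (K1 + K2) * dist p p' := by ring
  · calc |g p - h p| ≤ |g p| + |h p| := abs_sub _ _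
      _ ≤ C1 + C2 := add_le_add (hb1 p) (hb2 p)

lemma finsetSum {ι : Type*} (s : Finset ι) (g : ι → E → ℝ)
    (h : ∀ i ∈ s, LipBnd (g i)) : LipBnd (fun p => ∑ i ∈ s, g i p) := by
  classical
  induction s using Finset.induction_on with
  | empty => simpa using LipBnd.const 0
  | insert a s' hni ih =>
    simp only [Finset.sum_insert hni]
    have h1 : LipBnd (g a) := h a (Finset.mem_insert_self a s')
    have h2 : LipBnd (fun p => ∑ i ∈ s', g i p) :=
      ih (fun i hi => h i (Finset.mem_insert_of_mem hi))
    obtain ⟨K1, C1, hl1, hb1⟩ := h1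
    obtain ⟨K2, C2, hl2, hb2⟩ := h2
    refine ⟨K1 + K2, C1 + C2, fun p p' => ?_, fun p => ?_⟩
    · calc |g a p + ∑ i ∈ s', g i p - (g a p' + ∑ i ∈ s', g i p')|
          = |(g a p - g a p') + ((∑ i ∈ s', g i p) - ∑ i ∈ s', g i p')| := by ring_nf
        _ ≤ |g a p - g a p'| + |(∑ i ∈ s', g i p) - ∑ i ∈ s', g i p'| := abs_add_le _ _
        _ ≤ K1 * dist p p' + K2 * dist p p' := add_le_add (hl1 p p') (hl2 p p')
        _ = (K1 + K2) * dist p p' := by ring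
    · calc |g a p + ∑ i ∈ s', g i p| ≤ |g a p| + |∑ i ∈ s', g i p| := abs_add_le _ _
        _ ≤ C1 + C2 := add_le_add (hb1 p) (hb2 p)

end LipBnd

/-- If `h 0 ≥ 0` and the right derivative of `h` is nonnegative whenever `h ≤ 0`,
then `h` stays nonnegative on `[0, ∞)`. -/
lemma aux_nonneg_of_right_deriv {h d : ℝ → ℝ}
    (hd : ∀ t ∈ Ici (0:ℝ), HasDerivWithinAt h (d t) (Ici 0) t)
    (h0 : 0 ≤ h 0)
    (key : ∀ t ∈ Ici (0:ℝ), h t ≤ 0 → 0 ≤ d t) :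
    ∀ t ∈ Ici (0:ℝ), 0 ≤ h t := by
  have hc : ContinuousOn h (Ici 0) := fun t ht => (hd t ht).continuousWithinAt
  intro T hT
  by_contra hneg
  push_neg at hneg
  have hT0 : (0:ℝ) < T := by
    rcases eq_or_lt_of_le (mem_Ici.1 hT) with heq | hlt
    · exfalso; rw [← heq] at hneg; linarith
    · exact hlt
  set A : Set ℝ := Icc 0 T ∩ h ⁻¹' (Ici 0) with hA
  have hclosed : IsClosed A :=
    (hc.mono Icc_subset_Ici_self).preimage_isClosed_of_isClosed isClosed_Icc isClosed_Ici
  have h0A : (0:ℝ) ∈ A := ⟨⟨le_refl 0, hT0.le⟩, h0⟩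
  have hbdd : BddAbove A := BddAbove.mono inter_subset_left bddAbove_Icc
  set s := sSup A with hs
  have hsA : s ∈ A := hclosed.csSup_mem ⟨0, h0A⟩ hbdd
  have hs0 : 0 ≤ s := hsA.1.1
  have hsT : s ≤ T := hsA.1.2
  have hslt : s < T := by
    rcases eq_or_lt_of_le hsT with heq | hlt
    · exfalso; have := hsA.2; rw [heq] at this; exact absurd this (not_le.2 hneg)
    · exact hlt
  have hafter : ∀ u, s < u → u ≤ T → h u < 0 := by
    intro u hsu huT
    by_contra hge
    push_neg at hge
    have hu : u ∈ A := ⟨⟨hs0.trans hsu.le, huT⟩, hge⟩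
    exact absurd (le_csSup hbdd hu) (not_le.2 hsu)
  have hs_le : h s ≤ 0 := by
    have htend : Filter.Tendsto h (nhdsWithin s (Ioi s)) (nhds (h s)) :=
      (hc s hs0).mono (fun u hu => hs0.trans (le_of_lt hu))
    refine le_of_tendsto htend ?_
    filter_upwards [Ioc_mem_nhdsGT_of_mem (⟨le_refl s, hslt⟩ : s ∈ Ico s T)] with u hu
    exact (hafter u hu.1 hu.2).le
  have hfence : ∀ ⦃u⦄, u ∈ Icc s T → -h u ≤ (fun _ => (0:ℝ)) u := by
    refine image_le_of_deriv_right_le_deriv_boundary (f := fun u => -h u)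
      (f' := fun u => -(d u)) (B := fun _ => (0:ℝ)) (B' := fun _ => (0:ℝ))
      ((hc.mono (fun u hu => hs0.trans hu.1)).neg) ?_ (by simpa using hsA.2) continuousOn_const
      (fun u _ => hasDerivWithinAt_const u _ 0) ?_
    · intro u hu
      exact ((hd u (hs0.trans hu.1)).neg).mono (Ici_subset_Ici.2 (hs0.trans hu.1))
    · intro u hu
      have hu0 : (0:ℝ) ≤ u := hs0.trans hu.1
      have hule : h u ≤ 0 := by
        rcases eq_or_lt_of_le hu.1 with heq | hlt
        · rw [← heq]; exact hs_le
        · exact (hafter u hlt hu.2.le).le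
      simpa using key u hu0 hule
  have hfin := hfence (right_mem_Icc.2 hsT)
  simp only [neg_nonpos] at hfin
  exact absurd hfin (not_le.2 hneg)

variable {S : Type*} [Fintype S] [DecidableEq S] {M : ℕ}

/-- The coupling term of the GKE vector field. -/
noncomputable def gkeC (q : Fin M → ℝ) (W : S → S → Fin M → Fin M → ℝ) (ψ : S → S → S)
    (a b : S) (j : Fin M) (p : Fin M → S → ℝ) : ℝ :=
  (1 / (M : ℝ)) * ∑ k, q k * W a b j k * p k (ψ a b)

/-- The GKE vector field. -/
noncomputable def gkeF (q : Fin M → ℝ) (W : S → S → Fin M → Fin M → ℝ) (Φ : S → S → ℝ → ℝ)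
    (ψ : S → S → S) (p : Fin M → S → ℝ) : Fin M → S → ℝ := fun j x =>
  (∑ y ∈ Finset.univ.erase x, Φ y x (gkeC q W ψ y x j p) * p j y)
    - ∑ y ∈ Finset.univ.erase x, Φ x y (gkeC q W ψ x y j p) * p j x

/-- The GKE vector field with state variables clamped to `[A, B]`. -/
noncomputable def gkeFC (A B : ℝ) (q : Fin M → ℝ) (W : S → S → Fin M → Fin M → ℝ)
    (Φ : S → S → ℝ → ℝ) (ψ : S → S → S) (p : Fin M → S → ℝ) : Fin M → S → ℝ := fun j x =>
  (∑ y ∈ Finset.univ.erase x, Φ y x (gkeC q W ψ y x j p) * (min (max (p j y) A) B))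
    - ∑ y ∈ Finset.univ.erase x, Φ x y (gkeC q W ψ x y j p) * (min (max (p j x) A) B)

lemma gkeFC_eq_gkeF {A B : ℝ} {q : Fin M → ℝ} {W : S → S → Fin M → Fin M → ℝ}
    {Φ : S → S → ℝ → ℝ} {ψ : S → S → S} {p : Fin M → S → ℝ}
    (h : ∀ j x, A ≤ p j x ∧ p j x ≤ B) :
    gkeFC A B q W Φ ψ p = gkeF q W Φ ψ p := by
  funext j x
  unfold gkeFC gkeF
  congr 1 <;> refine Finset.sum_congr rfl (fun y _ => ?_)
  · rw [max_eq_left (h j y).1, min_eq_left (h j y).2]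
  · rw [max_eq_left (h j x).1, min_eq_left (h j x).2]

lemma gkeFC_sum (A B : ℝ) (q : Fin M → ℝ) (W : S → S → Fin M → Fin M → ℝ)
    (Φ : S → S → ℝ → ℝ) (ψ : S → S → S) (p : Fin M → S → ℝ) (j : Fin M) :
    ∑ x, gkeFC A B q W Φ ψ p j x = 0 := by
  unfold gkeFC
  rw [Finset.sum_sub_distrib, sub_eq_zero]
  exact Finset.sum_comm' (fun x y => by
    simp only [Finset.mem_univ, Finset.mem_erase, true_and, and_true, ne_comm])

omit [DecidableEq S] in
lemma lipBnd_phiC {q : Fin M → ℝ} {W : S → S → Fin M → Fin M → ℝ} {ψ : S → S → S}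
    {Φ : S → S → ℝ → ℝ} {L : S → S → NNReal} {CΦ CW : ℝ} (a b : S) (j : Fin M)
    (hq : ∀ k, 0 ≤ q k) (hCW : 0 ≤ CW) (hW : ∀ (x y : S) (j k : Fin M), |W x y j k| ≤ CW)
    (hlip : ∀ x y : S, LipschitzWith (L x y) (Φ x y))
    (hbdd : ∀ (x y : S) (u : ℝ), |Φ x y u| ≤ CΦ) :
    LipBnd (fun p : Fin M → S → ℝ => Φ a b (gkeC q W ψ a b j p)) := by
  refine ⟨(L a b : ℝ) * ((1/(M:ℝ)) * ((∑ k, q k) * CW)), CΦ, fun p p' => ?_, fun p => hbdd _ _ _⟩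
  have h1 : |Φ a b (gkeC q W ψ a b j p) - Φ a b (gkeC q W ψ a b j p')| ≤
      (L a b : ℝ) * |gkeC q W ψ a b j p - gkeC q W ψ a b j p'| := by
    have := (hlip a b).dist_le_mul (gkeC q W ψ a b j p) (gkeC q W ψ a b j p')
    rwa [Real.dist_eq, Real.dist_eq] at this
  have hdiff : gkeC q W ψ a b j p - gkeC q W ψ a b j p'
      = (1/(M:ℝ)) * ∑ k, q k * W a b j k * (p k (ψ a b) - p' k (ψ a b)) := by
    unfold gkeC
    rw [← mul_sub, ← Finset.sum_sub_distrib]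
    congr 1
    exact Finset.sum_congr rfl fun k _ => by ring
  have h2 : |gkeC q W ψ a b j p - gkeC q W ψ a b j p'|
      ≤ (1/(M:ℝ)) * ((∑ k, q k) * CW) * dist p p' := by
    rw [hdiff, abs_mul, abs_of_nonneg (by positivity : (0:ℝ) ≤ 1/(M:ℝ)), mul_assoc]
    refine mul_le_mul_of_nonneg_left ?_ (by positivity)
    calc |∑ k, q k * W a b j k * (p k (ψ a b) - p' k (ψ a b))|
        ≤ ∑ k, |q k * W a b j k * (p k (ψ a b) - p' k (ψ a b))| :=
          Finset.abs_sum_le_sum_abs _ _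
      _ ≤ ∑ k, q k * (CW * dist p p') := by
          refine Finset.sum_le_sum fun k _ => ?_
          rw [abs_mul, abs_mul, abs_of_nonneg (hq k), mul_assoc]
          refine mul_le_mul_of_nonneg_left ?_ (hq k)
          have hd : |p k (ψ a b) - p' k (ψ a b)| ≤ dist p p' := by
            rw [← Real.dist_eq]
            exact (dist_le_pi_dist (p k) (p' k) (ψ a b)).trans (dist_le_pi_dist p p' k)
          exact mul_le_mul (hW a b j k) hd (abs_nonneg _) hCW
      _ = (∑ k, q k) * CW * dist p p' := by rw [mul_assoc, ← Finset.sum_mul]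
  calc |Φ a b (gkeC q W ψ a b j p) - Φ a b (gkeC q W ψ a b j p')|
      ≤ (L a b : ℝ) * ((1/(M:ℝ)) * ((∑ k, q k) * CW) * dist p p') :=
        h1.trans (mul_le_mul_of_nonneg_left h2 (L a b).coe_nonneg)
    _ = (L a b : ℝ) * ((1/(M:ℝ)) * ((∑ k, q k) * CW)) * dist p p' := by ring

omit [DecidableEq S] in
lemma lipBnd_clamp {A B : ℝ} (hAB : A ≤ B) (j : Fin M) (x : S) :
    LipBnd (fun p : Fin M → S → ℝ => min (max (p j x) A) B) := by
  refine ⟨1, max |A| |B|, fun p p' => ?_, fun p => ?_⟩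
  · have h0 := abs_min_sub_min_le_max (max (p j x) A) B (max (p' j x) A) B
    have h0' : |max (p j x) A - max (p' j x) A| ⊔ |B - B| = |max (p j x) A - max (p' j x) A| := by
      simp
    have h1 : |min (max (p j x) A) B - min (max (p' j x) A) B|
        ≤ |max (p j x) A - max (p' j x) A| := h0.trans (le_of_eq h0')
    have h2 : |max (p j x) A - max (p' j x) A| ≤ |p j x - p' j x| :=
      abs_max_sub_max_le_abs _ _ _
    have h3 : |p j x - p' j x| ≤ dist p p' := by
      rw [← Real.dist_eq]
      exact (dist_le_pi_dist (p j) (p' j) x).trans (dist_le_pi_dist p p' j)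
    rw [one_mul]
    exact h1.trans (h2.trans h3)
  · have hA : A ≤ min (max (p j x) A) B := le_min (le_max_right _ _) hAB
    have hB : min (max (p j x) A) B ≤ B := min_le_right _ _
    rw [abs_le]
    constructor
    · calc -(max |A| |B|) ≤ -|A| := neg_le_neg (le_max_left _ _)
        _ ≤ A := neg_abs_le A
        _ ≤ _ := hA
    · exact hB.trans ((le_abs_self B).trans (le_max_right _ _))

lemma gkeFC_lipschitz_bounded {A B : ℝ} {q : Fin M → ℝ} {W : S → S → Fin M → Fin M → ℝ}
    {ψ : S → S → S} {Φ : S → S → ℝ → ℝ} {L : S → S → NNReal} {CΦ CW : ℝ}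
    (hAB : A ≤ B) (hq : ∀ k, 0 ≤ q k) (hCW : 0 ≤ CW)
    (hW : ∀ (x y : S) (j k : Fin M), |W x y j k| ≤ CW)
    (hlip : ∀ x y : S, LipschitzWith (L x y) (Φ x y))
    (hbdd : ∀ (x y : S) (u : ℝ), |Φ x y u| ≤ CΦ) :
    ∃ (K : NNReal) (C : ℝ), 0 ≤ C ∧ LipschitzWith K (gkeFC A B q W Φ ψ) ∧
      ∀ p, ‖gkeFC A B q W Φ ψ p‖ ≤ C := by
  classical
  have hco : ∀ jx : Fin M × S,
      ∃ K C : ℝ, (∀ p p', |gkeFC A B q W Φ ψ p jx.1 jx.2 - gkeFC A B q W Φ ψ p' jx.1 jx.2|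
        ≤ K * dist p p') ∧ ∀ p, |gkeFC A B q W Φ ψ p jx.1 jx.2| ≤ C := by
    rintro ⟨j, x⟩
    have hlb : LipBnd (fun p => gkeFC A B q W Φ ψ p j x) := by
      refine LipBnd.sub ?_ ?_ <;>
        refine LipBnd.finsetSum _ _ fun y _ => ?_
      · exact (lipBnd_phiC y x j hq hCW hW hlip hbdd).mul (lipBnd_clamp hAB j y)
      · exact (lipBnd_phiC x y j hq hCW hW hlip hbdd).mul (lipBnd_clamp hAB j x)
    exact hlb
  choose K C hl hb using hco
  set K₀ : ℝ := ∑ jx : Fin M × S, max (K jx) 0 with hK₀def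
  set C₀ : ℝ := ∑ jx : Fin M × S, max (C jx) 0 with hC₀def
  have hK₀ : 0 ≤ K₀ := Finset.sum_nonneg fun _ _ => le_max_right _ _
  have hC₀ : 0 ≤ C₀ := Finset.sum_nonneg fun _ _ => le_max_right _ _
  have hKle : ∀ jx, K jx ≤ K₀ := fun jx => (le_max_left _ _).trans
    (Finset.single_le_sum (f := fun jx => max (K jx) 0) (fun _ _ => le_max_right _ _)
      (Finset.mem_univ jx))
  have hCle : ∀ jx, C jx ≤ C₀ := fun jx => (le_max_left _ _).trans
    (Finset.single_le_sum (f := fun jx => max (C jx) 0) (fun _ _ => le_max_right _ _)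
      (Finset.mem_univ jx))
  refine ⟨Real.toNNReal K₀, C₀, hC₀, ?_, ?_⟩
  · refine LipschitzWith.of_dist_le_mul fun p p' => ?_
    rw [Real.coe_toNNReal _ hK₀]
    refine (dist_pi_le_iff (mul_nonneg hK₀ dist_nonneg)).2 fun j => ?_
    refine (dist_pi_le_iff (mul_nonneg hK₀ dist_nonneg)).2 fun x => ?_
    rw [Real.dist_eq]
    exact (hl (j, x) p p').trans (mul_le_mul_of_nonneg_right (hKle (j, x)) dist_nonneg)
  · intro p
    refine (pi_norm_le_iff_of_nonneg hC₀).2 fun j => ?_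
    refine (pi_norm_le_iff_of_nonneg hC₀).2 fun x => ?_
    rw [Real.norm_eq_abs]
    exact (hb (j, x) p).trans (hCle (j, x))

end Aux

/-- The macroscale generalized Kolmogorov equations for `M` patches: the transition rate
from `x` to `y` in patch `j` is `Φ_{x,y}((1/M) Σ_k q_k W_{x,y}(j,k) P^k_{ψ(x,y)})`. -/
def IsMacroGKESolution {S : Type*} [Fintype S] [DecidableEq S] {M : ℕ}
    (q : Fin M → ℝ) (W : S → S → Fin M → Fin M → ℝ) (Φ : S → S → ℝ → ℝ)
    (ψ : S → S → S) (P : ℝ → Fin M → S → ℝ) : Prop :=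
  ∀ t ∈ Ici (0:ℝ), ∀ (j : Fin M) (x : S),
    HasDerivWithinAt (fun s => P s j x)
      ((∑ y ∈ Finset.univ.erase x,
          Φ y x ((1 / (M : ℝ)) * ∑ k, q k * W y x j k * P t k (ψ y x)) * P t j y)
        - ∑ y ∈ Finset.univ.erase x,
          Φ x y ((1 / (M : ℝ)) * ∑ k, q k * W x y j k * P t k (ψ x y)) * P t j x)
      (Ici 0) t

/-- For a finite state space, `M ≥ 1` patches with nonnegative weights
`q`, bounded interaction weights `W_{x,y}`, and Lipschitz, bounded, nonnegative rate
nonlinearities `Φ_{x,y}`, the macroscale generalized Kolmogorov equations have, for every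
initial condition with each patch probability vector in the simplex `Δ`, a solution defined
for all `t ≥ 0` which keeps every `P^j(t)` in `Δ`, and any solution with the same initial
condition coincides with it for all `t ≥ 0`. -/
theorem macroscale_gke_wellposed
    {S : Type*} [Fintype S] [DecidableEq S]
    (M : ℕ) (hM : 1 ≤ M)
    (q : Fin M → ℝ) (hq : ∀ k, 0 ≤ q k)
    (W : S → S → Fin M → Fin M → ℝ)
    (CW : ℝ) (hWbdd : ∀ (x y : S) (j k : Fin M), |W x y j k| ≤ CW)
    (Φ : S → S → ℝ → ℝ) (L : S → S → NNReal)
    (hΦlip : ∀ x y : S, LipschitzWith (L x y) (Φ x y))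
    (CΦ : ℝ) (hΦbdd : ∀ (x y : S) (u : ℝ), |Φ x y u| ≤ CΦ)
    (hΦnn : ∀ (x y : S) (u : ℝ), 0 ≤ Φ x y u)
    (ψ : S → S → S)
    (P₀ : Fin M → S → ℝ)
    (hP₀ : ∀ j : Fin M, (∀ x : S, 0 ≤ P₀ j x) ∧ ∑ x, P₀ j x = 1) :
    ∃ P : ℝ → Fin M → S → ℝ,
      (∀ (j : Fin M) (x : S), P 0 j x = P₀ j x) ∧
      IsMacroGKESolution q W Φ ψ P ∧
      (∀ t ∈ Ici (0:ℝ), ∀ j : Fin M, (∀ x : S, 0 ≤ P t j x) ∧ ∑ x, P t j x = 1) ∧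
      (∀ Q : ℝ → Fin M → S → ℝ,
        (∀ (j : Fin M) (x : S), Q 0 j x = P₀ j x) →
        IsMacroGKESolution q W Φ ψ Q →
        ∀ t ∈ Ici (0:ℝ), ∀ (j : Fin M) (x : S), Q t j x = P t j x) := by
  classical
  -- basic consequences of the hypotheses
  have hSne : Nonempty S := by
    by_contra hemp
    rw [not_nonempty_iff] at hemp
    have h1 := (hP₀ ⟨0, hM⟩).2
    rw [Finset.univ_eq_empty, Finset.sum_empty] at h1
    exact zero_ne_one h1
  have hCW : 0 ≤ CW := by
    obtain ⟨x⟩ := hSne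
    exact (abs_nonneg _).trans (hWbdd x x ⟨0, hM⟩ ⟨0, hM⟩)
  -- the clamped vector field on `[0,1]`
  obtain ⟨K, C, hC0, hKlip, hCbnd⟩ :=
    gkeFC_lipschitz_bounded (A := (0:ℝ)) (B := (1:ℝ)) (q := q) (W := W) (ψ := ψ) (Φ := Φ)
      (L := L) (CΦ := CΦ) (CW := CW) zero_le_one hq hCW hWbdd hΦlip hΦbdd
  -- existence of solutions on `[0, n]` for every `n`
  have hex : ∀ n : ℕ, ∃ g : ℝ → Fin M → S → ℝ, g 0 = P₀ ∧
      ∀ t ∈ Icc (0:ℝ) (n:ℝ), HasDerivWithinAt g (gkeFC 0 1 q W Φ ψ (g t))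
        (Icc (0:ℝ) (n:ℝ)) t := by
    intro n
    have hpl : IsPicardLindelof (fun _ : ℝ => gkeFC 0 1 q W Φ ψ) (tmin := 0) (tmax := (n:ℝ))
        ⟨0, le_refl 0, n.cast_nonneg⟩ P₀ (Real.toNNReal (C * n)) 0 (Real.toNNReal C) K :=
      { lipschitzOnWith := fun _ _ => hKlip.lipschitzOnWith
        continuousOn := fun _ _ => continuousOn_const
        norm_le := fun _ _ x _ => (hCbnd x).trans (Real.le_coe_toNNReal C)
        mul_max_le := by
          simp [Real.coe_toNNReal _ hC0, Real.coe_toNNReal _ (mul_nonneg hC0 n.cast_nonneg)] }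
    exact hpl.exists_eq_forall_mem_Icc_hasDerivWithinAt₀
  choose sol hsol0 hsolD using hex
  -- uniqueness of solutions of the clamped equation
  have huniq : ∀ (b : ℝ) (g₁ g₂ : ℝ → Fin M → S → ℝ),
      ContinuousOn g₁ (Icc 0 b) →
      (∀ t ∈ Ico (0:ℝ) b, HasDerivWithinAt g₁ (gkeFC 0 1 q W Φ ψ (g₁ t)) (Ici t) t) →
      ContinuousOn g₂ (Icc 0 b) →
      (∀ t ∈ Ico (0:ℝ) b, HasDerivWithinAt g₂ (gkeFC 0 1 q W Φ ψ (g₂ t)) (Ici t) t) →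
      g₁ 0 = g₂ 0 → EqOn g₁ g₂ (Icc 0 b) := by
    intro b g₁ g₂ hc1 hd1 hc2 hd2 h0
    exact ODE_solution_unique_of_mem_Icc_right
      (v := fun _ : ℝ => gkeFC 0 1 q W Φ ψ) (s := fun _ => univ) (K := K)
      (fun _ _ => hKlip.lipschitzOnWith) hc1 hd1 (fun _ _ => mem_univ _) hc2 hd2
      (fun _ _ => mem_univ _) h0
  have hsolC : ∀ n : ℕ, ContinuousOn (sol n) (Icc (0:ℝ) (n:ℝ)) := fun n t ht =>
    (hsolD n t ht).continuousWithinAt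
  have hsolD' : ∀ (n : ℕ) (t : ℝ), t ∈ Ico (0:ℝ) (n:ℝ) →
      HasDerivWithinAt (sol n) (gkeFC 0 1 q W Φ ψ (sol n t)) (Ici t) t := fun n t ht =>
    (hsolD n t ⟨ht.1, ht.2.le⟩).mono_of_mem_nhdsWithin (Icc_mem_nhdsGE_of_mem ht)
  have agree : ∀ m n : ℕ, m ≤ n → EqOn (sol m) (sol n) (Icc (0:ℝ) (m:ℝ)) := by
    intro m n hmn
    refine huniq (m:ℝ) (sol m) (sol n) (hsolC m) (fun t ht => hsolD' m t ht)
      ((hsolC n).mono (Icc_subset_Icc le_rfl (Nat.cast_le.2 hmn)))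
      (fun t ht => hsolD' n t ⟨ht.1, ht.2.trans_le (Nat.cast_le.2 hmn)⟩) ?_
    rw [hsol0 m, hsol0 n]
  -- the global solution
  set P : ℝ → Fin M → S → ℝ := fun t => sol (⌊t⌋₊ + 1) t with hPdef
  have hPeq : ∀ (n : ℕ) (t : ℝ), t ∈ Icc (0:ℝ) (n:ℝ) → P t = sol n t := by
    intro n t ht
    have htf : t ≤ ((⌊t⌋₊ + 1 : ℕ) : ℝ) := by push_cast; exact (Nat.lt_floor_add_one t).le
    rcases le_total (⌊t⌋₊ + 1) n with hmn | hnm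
    · exact agree _ n hmn ⟨ht.1, htf⟩
    · exact (agree n _ hnm ⟨ht.1, ht.2⟩).symm
  have hP0 : P 0 = P₀ := hsol0 _
  have hPd : ∀ t ∈ Ici (0:ℝ), HasDerivWithinAt P (gkeFC 0 1 q W Φ ψ (P t)) (Ici 0) t := by
    intro t ht
    have htn : t < ((⌊t⌋₊ + 1 : ℕ) : ℝ) := by push_cast; exact Nat.lt_floor_add_one t
    have hmem : Icc (0:ℝ) ((⌊t⌋₊ + 1 : ℕ) : ℝ) ∈ nhdsWithin t (Ici 0) := by
      refine mem_nhdsWithin.2 ⟨Iio _, isOpen_Iio, htn, ?_⟩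
      rintro u ⟨hu1, hu2⟩
      exact ⟨hu2, le_of_lt hu1⟩
    have hd := (hsolD (⌊t⌋₊ + 1) t ⟨ht, htn.le⟩).mono_of_mem_nhdsWithin hmem
    have heq : ∀ᶠ u in nhdsWithin t (Ici 0), P u = sol (⌊t⌋₊ + 1) u :=
      Filter.eventually_of_mem hmem (fun u hu => hPeq (⌊t⌋₊ + 1) u hu)
    have hPt : P t = sol (⌊t⌋₊ + 1) t := hPeq _ t ⟨ht, htn.le⟩
    rw [hPt]
    exact HasDerivWithinAt.congr_of_eventuallyEq hd heq hPt
  have hPc : ContinuousOn P (Ici 0) := fun t ht => (hPd t ht).continuousWithinAt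
  have hPdco : ∀ t ∈ Ici (0:ℝ), ∀ (j : Fin M) (x : S),
      HasDerivWithinAt (fun s => P s j x) (gkeFC 0 1 q W Φ ψ (P t) j x) (Ici 0) t := by
    intro t ht j x
    exact hasDerivWithinAt_pi.1 (hasDerivWithinAt_pi.1 (hPd t ht) j) x
  -- conservation of total mass
  have hsum : ∀ t ∈ Ici (0:ℝ), ∀ j : Fin M, ∑ x, P t j x = 1 := by
    intro t ht j
    have hzero : ∀ u ∈ Ici (0:ℝ),
        HasDerivWithinAt (fun u => ∑ x, P u j x) 0 (Ici 0) u := by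
      intro u hu
      have hds : HasDerivWithinAt (fun u => ∑ x, P u j x)
          (∑ x, gkeFC 0 1 q W Φ ψ (P u) j x) (Ici 0) u :=
        HasDerivWithinAt.fun_sum (fun x _ => hPdco u hu j x)
      rwa [gkeFC_sum 0 1 q W Φ ψ (P u) j] at hds
    have hconst := constant_of_has_deriv_right_zero (a := (0:ℝ)) (b := t) (f := fun u => ∑ x, P u j x)
      (ContinuousOn.mono (fun u hu => (hzero u hu).continuousWithinAt) Icc_subset_Ici_self)
      (fun u hu => (hzero u hu.1).mono (Ici_subset_Ici.2 hu.1))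
    have h1' : ∑ x, P t j x = ∑ x, P 0 j x := hconst t ⟨ht, le_refl t⟩
    rw [h1', hP0]
    exact (hP₀ j).2
  -- nonnegativity
  have hpos : ∀ t ∈ Ici (0:ℝ), ∀ (j : Fin M) (x : S), 0 ≤ P t j x := by
    intro t ht j x
    refine aux_nonneg_of_right_deriv (h := fun s => P s j x)
      (d := fun s => gkeFC 0 1 q W Φ ψ (P s) j x)
      (fun s hs => hPdco s hs j x) ?_ ?_ t ht
    · show 0 ≤ P 0 j x
      rw [hP0]; exact (hP₀ j).1 x
    · intro s _ hle
      have hclamp : min (max (P s j x) 0) 1 = 0 := by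
        rw [max_eq_right hle]
        exact min_eq_left zero_le_one
      show (0:ℝ) ≤ gkeFC 0 1 q W Φ ψ (P s) j x
      unfold gkeFC
      rw [hclamp]
      simp only [mul_zero, Finset.sum_const_zero, sub_zero]
      refine Finset.sum_nonneg fun y _ => mul_nonneg (hΦnn _ _ _) ?_
      exact le_min (le_max_right _ _) zero_le_one
  have hle1 : ∀ t ∈ Ici (0:ℝ), ∀ (j : Fin M) (x : S), P t j x ≤ 1 := by
    intro t ht j x
    have h1 := Finset.single_le_sum (f := fun y => P t j y)
      (fun y _ => hpos t ht j y) (Finset.mem_univ x)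
    rwa [hsum t ht j] at h1
  have hVF : ∀ t ∈ Ici (0:ℝ), gkeFC 0 1 q W Φ ψ (P t) = gkeF q W Φ ψ (P t) := fun t ht =>
    gkeFC_eq_gkeF (fun j x => ⟨hpos t ht j x, hle1 t ht j x⟩)
  have hPdF : ∀ t ∈ Ici (0:ℝ), HasDerivWithinAt P (gkeF q W Φ ψ (P t)) (Ici 0) t := by
    intro t ht
    have h1 := hPd t ht
    rwa [hVF t ht] at h1
  refine ⟨P, fun j x => by rw [hP0], ?_, fun t ht j => ⟨fun x => hpos t ht j x, hsum t ht j⟩, ?_⟩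
  · -- P is a solution of the macroscale GKE
    intro t ht j x
    exact hasDerivWithinAt_pi.1 (hasDerivWithinAt_pi.1 (hPdF t ht) j) x
  · -- uniqueness
    intro Q hQ0 hQsol t ht j x
    have hQ0' : Q 0 = P₀ := funext fun j => funext fun x => hQ0 j x
    have hQd : ∀ s ∈ Ici (0:ℝ), HasDerivWithinAt Q (gkeF q W Φ ψ (Q s)) (Ici 0) s := by
      intro s hs
      exact hasDerivWithinAt_pi.2 fun j => hasDerivWithinAt_pi.2 fun x => hQsol s hs j x
    have hQc : ContinuousOn Q (Ici 0) := fun s hs => (hQd s hs).continuousWithinAt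
    obtain ⟨R1, hR1⟩ := (isCompact_Icc (a := (0:ℝ)) (b := t)).exists_bound_of_continuousOn
      (hQc.mono Icc_subset_Ici_self)
    obtain ⟨R2, hR2⟩ := (isCompact_Icc (a := (0:ℝ)) (b := t)).exists_bound_of_continuousOn
      (hPc.mono Icc_subset_Ici_self)
    set R : ℝ := max (max R1 R2) 0 with hRdef
    have hR0 : 0 ≤ R := le_max_right _ _
    have hbnd : ∀ (g : ℝ → Fin M → S → ℝ) (Rg : ℝ), (∀ s ∈ Icc (0:ℝ) t, ‖g s‖ ≤ Rg) →
        Rg ≤ R → ∀ s ∈ Icc (0:ℝ) t, ∀ (j : Fin M) (x : S), -R ≤ g s j x ∧ g s j x ≤ R := by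
      intro g Rg hg hRg s hs j x
      have h1 : |g s j x| ≤ R := by
        have h2 : ‖g s j x‖ ≤ ‖g s j‖ := norm_le_pi_norm (g s j) x
        have h3 : ‖g s j‖ ≤ ‖g s‖ := norm_le_pi_norm (g s) j
        rw [Real.norm_eq_abs] at h2
        exact h2.trans (h3.trans ((hg s hs).trans hRg))
      exact abs_le.1 h1
    have hQR := hbnd Q R1 hR1 ((le_max_left R1 R2).trans (le_max_left _ _))
    have hPR := hbnd P R2 hR2 ((le_max_right R1 R2).trans (le_max_left _ _))
    obtain ⟨K', C', _, hK'lip, _⟩ :=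
      gkeFC_lipschitz_bounded (A := -R) (B := R) (q := q) (W := W) (ψ := ψ) (Φ := Φ)
        (L := L) (CΦ := CΦ) (CW := CW) ((neg_nonpos_of_nonneg hR0).trans hR0)
        hq hCW hWbdd hΦlip hΦbdd
    have hQd2 : ∀ s ∈ Ico (0:ℝ) t,
        HasDerivWithinAt Q (gkeFC (-R) R q W Φ ψ (Q s)) (Ici s) s := by
      intro s hs
      have h1 := (hQd s hs.1).mono (Ici_subset_Ici.2 hs.1)
      rw [gkeFC_eq_gkeF (fun j x => hQR s ⟨hs.1, hs.2.le⟩ j x)]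
      exact h1
    have hPd2 : ∀ s ∈ Ico (0:ℝ) t,
        HasDerivWithinAt P (gkeFC (-R) R q W Φ ψ (P s)) (Ici s) s := by
      intro s hs
      have h1 := (hPdF s hs.1).mono (Ici_subset_Ici.2 hs.1)
      rw [gkeFC_eq_gkeF (fun j x => hPR s ⟨hs.1, hs.2.le⟩ j x)]
      exact h1
    have hEq := ODE_solution_unique_of_mem_Icc_right
      (v := fun _ : ℝ => gkeFC (-R) R q W Φ ψ) (s := fun _ => univ) (K := K')
      (fun _ _ => hK'lip.lipschitzOnWith)
      (hQc.mono Icc_subset_Ici_self) hQd2 (fun _ _ => mem_univ _)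
      (hPc.mono Icc_subset_Ici_self) hPd2 (fun _ _ => mem_univ _) (by rw [hQ0', hP0])
    have hfin := hEq (right_mem_Icc.2 ht)
    exact congrFun (congrFun hfin j) x
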